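/- The distribution with density p(ℓ) = (16/π²)·(f(ℓ)+g(ℓ))/((ℓ²+4)·ℓ) on (2, ∞) has infinite mean: ∫₂^∞ ℓ·p(ℓ) dℓ = ∞. -/

import Mathlib

open MeasureTheory Set Real
open scoped ENNReal

noncomputable def sideDensity (l : ℝ) : ℝ :=
  (16 / Real.pi ^ 2) *
    ((l * (Real.arctan ((l + Real.sqrt (l ^ 2 - 4)) / 2) -
        Real.arctan ((l - Real.sqrt (l ^ 2 - 4)) / 2))) +
      (Real.log (l + Real.sqrt (l ^ 2 - 4)) - Real.log (l - Real.sqrt (l ^ 2 - 4)))) /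
    ((l ^ 2 + 4) * l)

lemma lintegral_inv_Ioi_top : ∫⁻ l in Set.Ioi (3 : ℝ), ENNReal.ofReal l⁻¹ = ⊤ := by
  by_contra h
  have hmeas : AEStronglyMeasurable (fun l : ℝ => l⁻¹)
      (volume.restrict (Set.Ioi (3 : ℝ))) := by fun_prop
  have hnn : 0 ≤ᵐ[volume.restrict (Set.Ioi (3 : ℝ))] fun l : ℝ => l⁻¹ := by
    filter_upwards [ae_restrict_mem measurableSet_Ioi] with x hx
    have hx' : (3 : ℝ) < x := hx
    positivity
  have hint : IntegrableOn (fun l : ℝ => l⁻¹) (Set.Ioi 3) := by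
    rw [IntegrableOn, ← lintegral_ofReal_ne_top_iff_integrable hmeas hnn]
    exact h
  have hint2 : IntegrableOn (fun x : ℝ => x ^ (-1 : ℝ)) (Set.Ioi 3) := by
    refine hint.congr_fun (fun x _ => ?_) measurableSet_Ioi
    rw [Real.rpow_neg_one]
  rw [integrableOn_Ioi_rpow_iff (by norm_num)] at hint2
  linarith

lemma key_bound {l : ℝ} (hl : 3 < l) :
    8 * (Real.arctan (3 / 2) - Real.arctan (2 / 3)) / Real.pi ^ 2 * l⁻¹
      ≤ l * sideDensity l := by
  have hP : 0 < Real.pi ^ 2 := by positivity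
  have hl0 : (0 : ℝ) < l := by linarith
  set s := Real.sqrt (l ^ 2 - 4) with hs
  have hs0 : 0 ≤ s := Real.sqrt_nonneg _
  have hs2 : s ^ 2 = l ^ 2 - 4 := Real.sq_sqrt (by nlinarith)
  have hsl : s < l := by nlinarith
  have hs_lb : l - 4 / 3 ≤ s := by
    rw [hs, show l - 4/3 ≤ Real.sqrt (l ^ 2 - 4) ↔ _ from Real.le_sqrt (by linarith) (by nlinarith)]
    nlinarith
  -- arctan bound
  have hA : Real.arctan (3 / 2) ≤ Real.arctan ((l + s) / 2) :=
    Real.arctan_strictMono.monotone (by linarith)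
  have hB : Real.arctan ((l - s) / 2) ≤ Real.arctan (2 / 3) :=
    Real.arctan_strictMono.monotone (by linarith)
  set c0 := Real.arctan (3 / 2) - Real.arctan (2 / 3) with hc0def
  have hc0 : 0 < c0 := by
    have := Real.arctan_strictMono (show (2:ℝ)/3 < 3/2 by norm_num)
    simp only [hc0def]; linarith
  -- log bound
  have hlog : Real.log (l - s) ≤ Real.log (l + s) :=
    Real.log_le_log (by linarith) (by linarith)
  set fg := (l * (Real.arctan ((l + s) / 2) - Real.arctan ((l - s) / 2))) +
      (Real.log (l + s) - Real.log (l - s)) with hfg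
  have h1 : l * c0 ≤ fg := by
    have : l * c0 ≤ l * (Real.arctan ((l + s) / 2) - Real.arctan ((l - s) / 2)) := by
      apply mul_le_mul_of_nonneg_left _ hl0.le
      simp only [hc0def]; linarith
    simp only [hfg]; linarith
  have h2 : l * sideDensity l = 16 / Real.pi ^ 2 * fg / (l ^ 2 + 4) := by
    simp only [sideDensity, hfg, ← hs]
    field_simp
  rw [h2]
  have e1 : 8 * c0 / Real.pi ^ 2 * l⁻¹ = 8 * c0 / (Real.pi ^ 2 * l) := by
    field_simp
  have e2 : 16 / Real.pi ^ 2 * fg / (l ^ 2 + 4) = 16 * fg / (Real.pi ^ 2 * (l ^ 2 + 4)) := by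
    field_simp
  rw [e1, e2, div_le_div_iff₀ (by positivity) (by positivity)]
  have h3 : 8 * c0 * (l ^ 2 + 4) ≤ 16 * fg * l := by nlinarith
  nlinarith [mul_le_mul_of_nonneg_left h3 hP.le]

theorem stmt_14 :
    ∫⁻ l in Set.Ioi (2 : ℝ), ENNReal.ofReal (l * sideDensity l) = ⊤ := by
  set c : ℝ := 8 * (Real.arctan (3 / 2) - Real.arctan (2 / 3)) / Real.pi ^ 2 with hcdef
  have hc : 0 < c := by
    have := Real.arctan_strictMono (show (2:ℝ)/3 < 3/2 by norm_num)
    have hP : 0 < Real.pi ^ 2 := by positivity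
    rw [hcdef]
    apply div_pos (by linarith) hP
  have hmeas : Measurable fun l : ℝ => ENNReal.ofReal (l * sideDensity l) := by
    apply Measurable.ennreal_ofReal
    apply measurable_id.mul
    unfold sideDensity
    apply Measurable.div _ ((measurable_id.pow_const 2).add_const 4 |>.mul measurable_id)
    apply Measurable.mul measurable_const
    apply Measurable.add
    · exact measurable_id.mul ((((measurable_id.add ((measurable_id.pow_const 2).sub_const 4).sqrt).div_const 2).arctan).sub
        (((measurable_id.sub ((measurable_id.pow_const 2).sub_const 4).sqrt).div_const 2).arctan))
    · exact ((measurable_id.add ((measurable_id.pow_const 2).sub_const 4).sqrt).log).sub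
        ((measurable_id.sub ((measurable_id.pow_const 2).sub_const 4).sqrt).log)
  rw [eq_top_iff]
  calc (⊤ : ℝ≥0∞) = ENNReal.ofReal c * ∫⁻ l in Set.Ioi (3 : ℝ), ENNReal.ofReal l⁻¹ := by
        rw [lintegral_inv_Ioi_top, ENNReal.mul_top (by simp [ENNReal.ofReal_eq_zero, not_le, hc])]
    _ = ∫⁻ l in Set.Ioi (3 : ℝ), ENNReal.ofReal c * ENNReal.ofReal l⁻¹ :=
        (lintegral_const_mul' _ _ ENNReal.ofReal_ne_top).symm
    _ = ∫⁻ l in Set.Ioi (3 : ℝ), ENNReal.ofReal (c * l⁻¹) := by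
        simp [ENNReal.ofReal_mul hc.le]
    _ ≤ ∫⁻ l in Set.Ioi (3 : ℝ), ENNReal.ofReal (l * sideDensity l) := by
        refine setLIntegral_mono hmeas fun x hx => ?_
        exact ENNReal.ofReal_le_ofReal (key_bound hx)
    _ ≤ ∫⁻ l in Set.Ioi (2 : ℝ), ENNReal.ofReal (l * sideDensity l) :=
        lintegral_mono_set (Set.Ioi_subset_Ioi (by norm_num))
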